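/- Strong duality and primal recovery hold between the isotonic regression problem and its dual (BQP): if z* is the optimal solution of (BQP), then θ* := y − Ω⁻¹ Dᵀ z* is the optimal solution of the isotonic regression problem, and the optimal values satisfy ½ Σ_{i=1}^n ωᵢ(yᵢ − θ*ᵢ)² = yᵀ Dᵀ z* − ½ (z*)ᵀ D Ω⁻¹ Dᵀ z*. -/

import Mathlib

open Matrix

/-- The first-order difference matrix `D^(1,n) ∈ ℝ^{(n-1)×n}`:
`D i i = 1`, `D i (i+1) = -1`, all other entries zero. -/
def diffMat1 (n : ℕ) : Matrix (Fin (n-1)) (Fin n) ℝ :=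
  Matrix.of fun i j => if (j : ℕ) = (i : ℕ) then 1 else if (j : ℕ) = (i : ℕ) + 1 then -1 else 0

/-- The weighted least-squares objective of the isotonic regression problem. -/
noncomputable def irObj (n : ℕ) (ω y θ : Fin n → ℝ) : ℝ :=
  (1/2) * ∑ i, ω i * (y i - θ i)^2

/-- The dual objective `ψ(z) = ½ zᵀ D Ω⁻¹ Dᵀ z − yᵀ Dᵀ z` of the isotonic regression problem. -/
noncomputable def dualObj (n : ℕ) (ω y : Fin n → ℝ) (z : Fin (n-1) → ℝ) : ℝ :=
  (1/2) * (z ⬝ᵥ ((diffMat1 n * (Matrix.diagonal ω)⁻¹ * (diffMat1 n)ᵀ) *ᵥ z)) -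
    y ⬝ᵥ ((diffMat1 n)ᵀ *ᵥ z)

private lemma quad_nonneg_aux (a b : ℝ) (h : ∀ t : ℝ, 0 ≤ t → 0 ≤ t * a + t^2 * b) :
    0 ≤ a := by
  by_contra ha
  push_neg at ha
  rcases le_or_gt b 0 with hb | hb
  · have h1 := h 1 zero_le_one
    nlinarith
  · have ht0 : (0:ℝ) < -a / (2*b) := div_pos (by linarith) (by linarith)
    have htb : (-a / (2*b)) * (2*b) = -a := by field_simp
    have := h (-a/(2*b)) ht0.le
    nlinarith [this, htb, mul_pos ht0 hb]

private lemma quad_nonneg_aux' (a b : ℝ) (hb : 0 ≤ b)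
    (h : ∀ t : ℝ, 0 ≤ t → t ≤ 1 → 0 ≤ t * a + t^2 * b) : 0 ≤ a := by
  rcases eq_or_lt_of_le hb with hb0 | hb0
  · have h1 := h 1 zero_le_one le_rfl
    nlinarith
  · by_contra ha
    push_neg at ha
    rcases le_or_gt (-a/(2*b)) 1 with hle | hgt
    · have ht0 : (0:ℝ) < -a / (2*b) := div_pos (by linarith) (by linarith)
      have htb : (-a / (2*b)) * (2*b) = -a := by field_simp
      have := h (-a/(2*b)) ht0.le hle
      nlinarith [this, htb, mul_pos ht0 hb0]
    · have h2b : (0:ℝ) < 2*b := by positivity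
      have : 1 * (2*b) < -a := (lt_div_iff₀ h2b).mp hgt
      have h1 := h 1 zero_le_one le_rfl
      nlinarith

/-- Componentwise formula for `D *ᵥ v`. -/
private lemma diffMat1_mulVec (n : ℕ) (v : Fin n → ℝ) (i : Fin (n-1)) :
    (diffMat1 n *ᵥ v) i =
      v ⟨(i : ℕ), lt_of_lt_of_le i.isLt (Nat.sub_le n 1)⟩ -
        v ⟨(i : ℕ) + 1, Nat.add_lt_of_lt_sub i.isLt⟩ := by
  classical
  set a : Fin n := ⟨(i : ℕ), lt_of_lt_of_le i.isLt (Nat.sub_le n 1)⟩ with ha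
  set b : Fin n := ⟨(i : ℕ) + 1, Nat.add_lt_of_lt_sub i.isLt⟩ with hb
  have key : ∀ j : Fin n, diffMat1 n i j * v j
      = (if j = a then v a else 0) + (if j = b then -(v b) else 0) := by
    intro j
    rcases eq_or_ne j a with rfl | hja
    · have hab : a ≠ b := by simp [ha, hb, Fin.ext_iff]
      simp [diffMat1, ha, hab]
      exact fun h => absurd (ha.trans h) hab
    · rcases eq_or_ne j b with rfl | hjb
      · have h1 : ((b : ℕ) : ℕ) ≠ (i : ℕ) := by simp [hb]
        simp [diffMat1, hb, hja]
        exact fun h => absurd (hb.trans h) hja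
      · have h1 : (j : ℕ) ≠ (i : ℕ) := fun h => hja (Fin.ext (by simp [ha, h]))
        have h2 : (j : ℕ) ≠ (i : ℕ) + 1 := fun h => hjb (Fin.ext (by simp [hb, h]))
        simp [diffMat1, h1, h2, hja, hjb]
  show ∑ j, diffMat1 n i j * v j = v a - v b
  rw [Finset.sum_congr rfl fun j _ => key j, Finset.sum_add_distrib]
  simp [Finset.sum_ite_eq', sub_eq_add_neg]

/-- Strong duality and primal recovery: if `z*` solves the dual (BQP), then
`θ* = y − Ω⁻¹ Dᵀ z*` solves the isotonic regression problem, and the optimal values agree: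
`½ ∑ ωᵢ(yᵢ − θ*ᵢ)² = yᵀDᵀz* − ½ (z*)ᵀ D Ω⁻¹ Dᵀ z*`. -/
theorem isotonic_regression_strong_duality (n : ℕ) (hn : 2 ≤ n) (y ω : Fin n → ℝ)
    (hω : ∀ i, 0 < ω i) (z : Fin (n-1) → ℝ)
    (hzfeas : ∀ i, 0 ≤ z i)
    (hzopt : ∀ w : Fin (n-1) → ℝ, (∀ i, 0 ≤ w i) → dualObj n ω y z ≤ dualObj n ω y w) :
    (Monotone (y - (Matrix.diagonal ω)⁻¹ *ᵥ ((diffMat1 n)ᵀ *ᵥ z)) ∧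
      ∀ θ' : Fin n → ℝ, Monotone θ' →
        irObj n ω y (y - (Matrix.diagonal ω)⁻¹ *ᵥ ((diffMat1 n)ᵀ *ᵥ z)) ≤ irObj n ω y θ') ∧
    irObj n ω y (y - (Matrix.diagonal ω)⁻¹ *ᵥ ((diffMat1 n)ᵀ *ᵥ z)) =
      y ⬝ᵥ ((diffMat1 n)ᵀ *ᵥ z) -
        (1/2) * (z ⬝ᵥ ((diffMat1 n * (Matrix.diagonal ω)⁻¹ * (diffMat1 n)ᵀ) *ᵥ z)) := by
  classical
  have hωne : ∀ i, ω i ≠ 0 := fun i => (hω i).ne'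
  -- the inverse of the diagonal matrix
  have hWinv : (Matrix.diagonal ω)⁻¹ = Matrix.diagonal (fun i => (ω i)⁻¹) := by
    apply Matrix.inv_eq_right_inv
    rw [Matrix.diagonal_mul_diagonal,
      show (fun i => ω i * (ω i)⁻¹) = fun _ : Fin n => (1:ℝ) from
        funext fun i => mul_inv_cancel₀ (hωne i)]
    exact Matrix.diagonal_one
  set D := diffMat1 n with hDdef
  set W := Matrix.diagonal (fun i : Fin n => (ω i)⁻¹) with hWdef
  set Q := D * W * Dᵀ with hQdef
  set u := Dᵀ *ᵥ z with hudef
  set θ := y - W *ᵥ u with hθdef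
  rw [hWinv]
  -- symmetry of Q
  have hQsymm : Qᵀ = Q := by
    rw [hQdef, Matrix.transpose_mul, Matrix.transpose_mul, Matrix.transpose_transpose,
      Matrix.diagonal_transpose, Matrix.mul_assoc]
  have hbil : ∀ a b : Fin (n-1) → ℝ, a ⬝ᵥ (Q *ᵥ b) = b ⬝ᵥ (Q *ᵥ a) := by
    intro a b
    rw [Matrix.dotProduct_mulVec, ← Matrix.mulVec_transpose, hQsymm, dotProduct_comm]
  -- auxiliary dot product identities
  have hyd : ∀ d : Fin (n-1) → ℝ, y ⬝ᵥ (Dᵀ *ᵥ d) = (D *ᵥ y) ⬝ᵥ d := by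
    intro d
    rw [Matrix.dotProduct_mulVec, Matrix.vecMul_transpose]
  -- quadratic expansion of the dual objective
  have hexp : ∀ (t : ℝ) (d : Fin (n-1) → ℝ),
      dualObj n ω y (z + t • d) = dualObj n ω y z
        + t * ((Q *ᵥ z - D *ᵥ y) ⬝ᵥ d) + t^2/2 * (d ⬝ᵥ (Q *ᵥ d)) := by
    intro t d
    have hswap := hbil z d
    have hQzd : (Q *ᵥ z) ⬝ᵥ d = d ⬝ᵥ (Q *ᵥ z) := dotProduct_comm _ _
    have hDyd : (D *ᵥ y) ⬝ᵥ d = y ⬝ᵥ (Dᵀ *ᵥ d) := (hyd d).symm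
    simp only [dualObj, hWinv, ← hDdef, ← hWdef, ← hQdef, Matrix.mulVec_add,
      Matrix.mulVec_smul, dotProduct_add, add_dotProduct,
      dotProduct_smul, smul_dotProduct, smul_eq_mul,
      sub_dotProduct]
    linear_combination (t/2) * hswap - t * hQzd + t * hDyd
  -- the gradient of the dual objective at z
  set g := Q *ᵥ z - D *ᵥ y with hgdef
  -- KKT sign condition
  have hg : ∀ i, 0 ≤ g i := by
    intro i
    apply quad_nonneg_aux (g i) ((Pi.single i 1 : Fin (n-1) → ℝ) ⬝ᵥ (Q *ᵥ Pi.single i 1) / 2)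
    intro t ht
    have hfeas : ∀ j, 0 ≤ (z + t • (Pi.single i 1 : Fin (n-1) → ℝ)) j := by
      intro j
      rcases eq_or_ne j i with rfl | hj
      · simp only [Pi.add_apply, Pi.smul_apply, Pi.single_eq_same, smul_eq_mul, mul_one]
        exact add_nonneg (hzfeas j) ht
      · simp [Pi.single_eq_of_ne hj, hzfeas j]
    have h1 := hzopt _ hfeas
    rw [hexp t (Pi.single i 1)] at h1
    have h2 : g ⬝ᵥ (Pi.single i 1 : Fin (n-1) → ℝ) = g i := by
      rw [dotProduct_single, mul_one]
    rw [h2] at h1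
    nlinarith [h1]
  -- nonnegativity of the quadratic form at z
  have hQz : Q *ᵥ z = D *ᵥ (W *ᵥ u) := by
    rw [hQdef, ← Matrix.mulVec_mulVec, ← Matrix.mulVec_mulVec, ← hudef]
  have hzQz : z ⬝ᵥ (Q *ᵥ z) = ∑ j, (ω j)⁻¹ * (u j)^2 := by
    rw [hQz, Matrix.dotProduct_mulVec, ← Matrix.mulVec_transpose, ← hudef]
    simp only [dotProduct, hWdef, Matrix.mulVec_diagonal]
    exact Finset.sum_congr rfl fun j _ => by ring
  have hzQz_nonneg : 0 ≤ z ⬝ᵥ (Q *ᵥ z) := by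
    rw [hzQz]
    exact Finset.sum_nonneg fun j _ =>
      mul_nonneg (inv_nonneg.mpr (hω j).le) (sq_nonneg _)
  -- complementary slackness
  have hgz_le : g ⬝ᵥ z ≤ 0 := by
    have := quad_nonneg_aux' (-(g ⬝ᵥ z)) (z ⬝ᵥ (Q *ᵥ z) / 2) (by linarith) ?_
    · linarith
    intro t ht0 ht1
    have hfeas : ∀ j, 0 ≤ (z + (-t) • z) j := by
      intro j
      have : (z + (-t) • z) j = (1 - t) * z j := by
        simp [smul_eq_mul]; ring
      rw [this]
      exact mul_nonneg (by linarith) (hzfeas j)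
    have h1 := hzopt _ hfeas
    rw [hexp (-t) z] at h1
    have h2 : (Q *ᵥ z - D *ᵥ y) ⬝ᵥ z = g ⬝ᵥ z := by rw [hgdef]
    rw [h2] at h1
    nlinarith [h1]
  have hgz_ge : 0 ≤ g ⬝ᵥ z :=
    Finset.sum_nonneg fun i _ => mul_nonneg (hg i) (hzfeas i)
  have hgz : g ⬝ᵥ z = 0 := le_antisymm hgz_le hgz_ge
  -- components of θ
  have hθcomp : ∀ j, θ j = y j - (ω j)⁻¹ * u j := by
    intro j
    simp [hθdef, hWdef, Matrix.mulVec_diagonal]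
  -- value of the primal objective at θ
  have hir : irObj n ω y θ = (1/2) * (z ⬝ᵥ (Q *ᵥ z)) := by
    rw [hzQz, irObj]
    congr 1
    refine Finset.sum_congr rfl fun j _ => ?_
    rw [hθcomp j]
    have hj := hωne j
    field_simp
    ring
  -- D applied to θ
  have hDθ : D *ᵥ θ = -g := by
    rw [hθdef, Matrix.mulVec_sub, ← hQz, hgdef]
    abel
  -- monotonicity step
  have step : ∀ (m : ℕ) (h : m + 1 < n),
      θ ⟨m, Nat.lt_of_succ_lt h⟩ ≤ θ ⟨m+1, h⟩ := by
    intro m h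
    have hm : m < n - 1 := Nat.lt_sub_of_add_lt h
    have hi := diffMat1_mulVec n θ ⟨m, hm⟩
    have hgi := hg ⟨m, hm⟩
    rw [hDθ] at hi
    simp only [Pi.neg_apply] at hi
    have : θ ⟨m, Nat.lt_of_succ_lt h⟩ - θ ⟨m+1, h⟩ = -(g ⟨m, hm⟩) := hi.symm
    linarith
  have hmono : Monotone θ := by
    have chain : ∀ b : ℕ, ∀ hb : b < n, ∀ a : ℕ, ∀ ha : a < n, a ≤ b →
        θ ⟨a, ha⟩ ≤ θ ⟨b, hb⟩ := by
      intro b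
      induction b with
      | zero =>
        intro hb a ha hab
        obtain rfl := Nat.le_zero.mp hab
        exact le_refl _
      | succ b ih =>
        intro hb a ha hab
        rcases eq_or_lt_of_le hab with rfl | h
        · exact le_refl _
        · have hab' : a ≤ b := Nat.lt_succ_iff.mp h
          have hb' : b < n := Nat.lt_of_succ_lt hb
          exact le_trans (ih hb' a ha hab') (step b hb)
    intro j k hjk
    have := chain (k : ℕ) k.isLt (j : ℕ) j.isLt hjk
    simpa using this
  refine ⟨⟨hmono, ?_⟩, ?_⟩
  · -- primal optimality
    intro θ' hθ'
    have key : ∀ j, ω j * (y j - θ' j)^2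
        = ω j * (y j - θ j)^2 - 2 * (u j * (θ' j - θ j)) + ω j * (θ' j - θ j)^2 := by
      intro j
      have h1 : ω j * (y j - θ j) = u j := by
        rw [hθcomp j, sub_sub_cancel, ← mul_assoc, mul_inv_cancel₀ (hωne j), one_mul]
      linear_combination (-2 * (θ' j - θ j)) * h1
    have hsum : irObj n ω y θ' = irObj n ω y θ - (∑ j, u j * (θ' j - θ j))
        + (1/2) * ∑ j, ω j * (θ' j - θ j)^2 := by
      simp only [irObj]
      rw [Finset.sum_congr rfl fun j _ => key j, Finset.sum_add_distrib,
        Finset.sum_sub_distrib, ← Finset.mul_sum]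
      ring
    have hquad : 0 ≤ ∑ j, ω j * (θ' j - θ j)^2 :=
      Finset.sum_nonneg fun j _ => mul_nonneg (hω j).le (sq_nonneg _)
    have hud : ∑ j, u j * (θ' j - θ j) = z ⬝ᵥ (D *ᵥ (θ' - θ)) := by
      rw [Matrix.dotProduct_mulVec, ← Matrix.mulVec_transpose, ← hudef]
      exact Finset.sum_congr rfl fun j _ => by simp
    have hzDθ : z ⬝ᵥ (D *ᵥ θ) = 0 := by
      rw [hDθ]
      have : z ⬝ᵥ (-g) = -(g ⬝ᵥ z) := by
        rw [dotProduct_neg, dotProduct_comm]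
      rw [this, hgz, neg_zero]
    have hzDθ' : z ⬝ᵥ (D *ᵥ θ') ≤ 0 := by
      refine Finset.sum_nonpos fun i _ => ?_
      have hmle : θ' ⟨(i : ℕ), lt_of_lt_of_le i.isLt (Nat.sub_le n 1)⟩ ≤
          θ' ⟨(i : ℕ) + 1, Nat.add_lt_of_lt_sub i.isLt⟩ :=
        hθ' (by simp [Fin.mk_le_mk])
      have := diffMat1_mulVec n θ' i
      have hDθ'i : (D *ᵥ θ') i ≤ 0 := by rw [this]; linarith
      exact mul_nonpos_of_nonneg_of_nonpos (hzfeas i) hDθ'i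
    have hud_le : ∑ j, u j * (θ' j - θ j) ≤ 0 := by
      rw [hud, Matrix.mulVec_sub, dotProduct_sub, hzDθ]
      linarith
    linarith [hsum, hquad, hud_le]
  · -- strong duality value
    have hval : z ⬝ᵥ (Q *ᵥ z) = y ⬝ᵥ u := by
      have h1 : (Q *ᵥ z - D *ᵥ y) ⬝ᵥ z = 0 := by rw [← hgdef]; exact hgz
      have h2 : (Q *ᵥ z) ⬝ᵥ z - (D *ᵥ y) ⬝ᵥ z = 0 := by
        rw [← sub_dotProduct, h1]
      have h3 : (Q *ᵥ z) ⬝ᵥ z = z ⬝ᵥ (Q *ᵥ z) := dotProduct_comm _ _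
      have h4 : (D *ᵥ y) ⬝ᵥ z = y ⬝ᵥ u := by
        rw [dotProduct_comm, Matrix.dotProduct_mulVec, ← Matrix.mulVec_transpose,
          ← hudef, dotProduct_comm]
      linarith
    rw [hir, hval]
    ring
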